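/- There exists a universal constant K0 > 0 (independent of all model parameters) such that in the Gaussian model setup with μ ≠ 0, if ε < min_{j : μ(j) > 0} μ(j), then the sequence (g_n) is strictly increasing on the range of integers n with n < min_{j : μ(j) > 0} max{3/2, 2 log(1/(1 − ε/μ(j)))} · (σ(j)/μ(j))², and strictly decreasing on the range of integers n with n ≥ max_{j : μ(j) > 0} (K0 + 2 log(1/(1 − ε/μ(j)))) · (σ(j)/μ(j))². -/

import Mathlib

open Real MeasureTheory ProbabilityTheory Filter Topology
open intervalIntegral


noncomputable def gstd (z : ℝ) : ℝ := Real.exp (-z ^ 2 / 2)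
noncomputable def Nf (y : ℝ) : ℝ := ∫ z in (0:ℝ)..y, gstd z
noncomputable def Hf (y : ℝ) : ℝ := y * gstd y
noncomputable def qf (y : ℝ) : ℝ := (1 - y ^ 2) * gstd y

lemma gstd_pos (z : ℝ) : 0 < gstd z := Real.exp_pos _

lemma gstd_le_one (z : ℝ) : gstd z ≤ 1 :=
  Real.exp_le_one_iff.mpr (by nlinarith [sq_nonneg z])

lemma gstd_neg (z : ℝ) : gstd (-z) = gstd z := by simp [gstd, neg_pow]

lemma continuous_gstd : Continuous gstd := by
  unfold gstd; fun_prop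

lemma hasDerivAt_gstd (y : ℝ) : HasDerivAt gstd (-y * gstd y) y := by
  have h : HasDerivAt (fun z : ℝ => -z ^ 2 / 2) (-y) y := by
    have := ((hasDerivAt_pow 2 y).neg).div_const 2
    simpa using this.congr_deriv (by ring)
  have := (Real.hasDerivAt_exp (-y ^ 2 / 2)).comp y h
  show HasDerivAt (Real.exp ∘ fun z : ℝ => -z ^ 2 / 2) (-y * gstd y) y
  simpa [gstd, mul_comm] using this

lemma intInt_gstd (a b : ℝ) : IntervalIntegrable gstd volume a b :=
  continuous_gstd.intervalIntegrable a b

lemma hasDerivAt_Nf (y : ℝ) : HasDerivAt Nf (gstd y) y :=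
  intervalIntegral.integral_hasDerivAt_right (intInt_gstd 0 y)
    continuous_gstd.stronglyMeasurable.stronglyMeasurableAtFilter
    continuous_gstd.continuousAt

lemma continuous_Nf : Continuous Nf :=
  Differentiable.continuous (fun y => (hasDerivAt_Nf y).differentiableAt)

lemma hasDerivAt_Hf (y : ℝ) : HasDerivAt Hf (qf y) y := by
  have h := (hasDerivAt_id y).mul (hasDerivAt_gstd y)
  have h2 : qf y = 1 * gstd y + id y * (-y * gstd y) := by simp [qf]; ring
  rw [h2]; exact h

lemma hasDerivAt_qf (y : ℝ) : HasDerivAt qf (y * (y ^ 2 - 3) * gstd y) y := by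
  have h1 : HasDerivAt (fun z : ℝ => 1 - z ^ 2) (-(2 * y)) y := by
    simpa using ((hasDerivAt_pow 2 y).const_sub 1)
  have h := h1.mul (hasDerivAt_gstd y)
  have h2 : y * (y ^ 2 - 3) * gstd y
      = -(2 * y) * gstd y + (1 - y ^ 2) * (-y * gstd y) := by ring
  rw [h2]; exact h

lemma continuous_Hf : Continuous Hf :=
  Differentiable.continuous (fun y => (hasDerivAt_Hf y).differentiableAt)

lemma continuous_qf : Continuous qf :=
  Differentiable.continuous (fun y => (hasDerivAt_qf y).differentiableAt)

lemma qf_anti : StrictAntiOn qf (Set.Icc 0 (Real.sqrt 3)) := by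
  apply strictAntiOn_of_deriv_neg (convex_Icc _ _) continuous_qf.continuousOn
  intro x hx
  rw [interior_Icc] at hx
  rw [(hasDerivAt_qf x).deriv]
  have h3 : x ^ 2 < 3 := by
    have := (Real.lt_sqrt hx.1.le).mp hx.2
    linarith
  exact mul_neg_of_neg_of_pos (mul_neg_of_pos_of_neg hx.1 (by linarith)) (gstd_pos x)

lemma Hf_anti : StrictAntiOn Hf (Set.Ici 1) := by
  apply strictAntiOn_of_deriv_neg (convex_Ici _) continuous_Hf.continuousOn
  intro x hx
  rw [interior_Ici] at hx
  rw [(hasDerivAt_Hf x).deriv]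
  have : (1:ℝ) < x := hx
  exact mul_neg_of_neg_of_pos (by nlinarith) (gstd_pos x)

lemma Hf_convex : StrictConvexOn ℝ (Set.Ici (Real.sqrt 3)) Hf := by
  apply strictConvexOn_of_deriv2_pos (convex_Ici _) continuous_Hf.continuousOn
  intro x hx
  rw [interior_Ici] at hx
  have hd : deriv Hf = qf := funext fun y => (hasDerivAt_Hf y).deriv
  have h2 : deriv^[2] Hf x = deriv (deriv Hf) x := by
    simp [Function.iterate_succ, Function.comp]
  rw [h2, hd, (hasDerivAt_qf x).deriv]
  have hx0 : 0 < x := lt_of_le_of_lt (Real.sqrt_nonneg 3) hx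
  have h3 : 3 < x ^ 2 := by
    have := (Real.sqrt_lt' hx0).mp hx
    linarith
  exact mul_pos (mul_pos hx0 (by linarith)) (gstd_pos x)

lemma sqrt_three_gt : (1.7:ℝ) < Real.sqrt 3 :=
  (Real.lt_sqrt (by norm_num)).mpr (by norm_num)

lemma sqrt_32_lt : Real.sqrt (3/2) < 1.23 :=
  (Real.sqrt_lt' (by norm_num)).mpr (by norm_num)

lemma q_compare {x r : ℝ} (hr : 0 < r) (hrx : r < x) (hx : x ^ 2 ≤ 3/2) :
    qf (x + r) < qf (x - r) := by
  have hx0 : 0 < x := hr.trans hrx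
  have hxle : x < 1.23 := by
    have h1 : x ≤ Real.sqrt (3/2) := by
      nlinarith [Real.sq_sqrt (by norm_num : (0:ℝ) ≤ 3/2), Real.sqrt_nonneg (3/2 : ℝ)]
    linarith [sqrt_32_lt]
  rcases le_or_gt (x + r) (Real.sqrt 3) with h | h
  · exact qf_anti ⟨by linarith, by linarith⟩ ⟨by linarith, h⟩ (by linarith)
  · have hneg : qf (x + r) < 0 := by
      have : 1 < (x + r) ^ 2 := by nlinarith [sqrt_three_gt]
      have := gstd_pos (x + r)
      unfold qf; nlinarith
    have hpos : 0 < qf (x - r) := by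
      have h1 : x - r < 1 := by nlinarith [sqrt_three_gt]
      have h2 : (x - r) ^ 2 < 1 := by nlinarith
      have := gstd_pos (x - r)
      unfold qf; nlinarith
    linarith

lemma key_inc {x y1 y2 : ℝ} (h0 : 0 < y1) (h1 : y1 < x) (hs : y1 + y2 = 2 * x)
    (hx : x ^ 2 < max (3/2) (2 * Real.log (x / y1))) :
    Hf y1 + Hf y2 < 2 * Hf x := by
  have hx0 : 0 < x := h0.trans h1
  by_cases hA : x ^ 2 ≤ 3/2
  · -- midpoint concavity argument
    set φ : ℝ → ℝ := fun δ => -Hf (x - δ) - Hf (x + δ) with hφ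
    have hder : ∀ δ : ℝ, HasDerivAt φ (qf (x - δ) - qf (x + δ)) δ := by
      intro δ
      have d1 : HasDerivAt (fun δ : ℝ => Hf (x - δ)) (qf (x - δ) * (-1)) δ :=
        (hasDerivAt_Hf (x - δ)).comp δ ((hasDerivAt_id δ).const_sub x)
      have d2 : HasDerivAt (fun δ : ℝ => Hf (x + δ)) (qf (x + δ) * 1) δ :=
        (hasDerivAt_Hf (x + δ)).comp δ ((hasDerivAt_id δ).const_add x)
      have := (d1.neg).sub d2
      exact this.congr_deriv (by ring)
    have hmono : StrictMonoOn φ (Set.Icc 0 x) := by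
      apply strictMonoOn_of_deriv_pos (convex_Icc _ _)
      · exact (Differentiable.continuous (fun δ => (hder δ).differentiableAt)).continuousOn
      · intro δ hδ
        rw [interior_Icc] at hδ
        rw [(hder δ).deriv]
        have := q_compare hδ.1 hδ.2 hA
        linarith
    have hmem0 : (0:ℝ) ∈ Set.Icc 0 x := ⟨le_rfl, hx0.le⟩
    have hmemr : x - y1 ∈ Set.Icc 0 x := ⟨by linarith, by linarith⟩
    have := hmono hmem0 hmemr (by linarith)
    have hy2 : y2 = x + (x - y1) := by linarith
    simp only [hφ, sub_zero, add_zero] at this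
    have hxy : x - (x - y1) = y1 := by ring
    rw [hxy] at this
    rw [hy2]
    linarith
  · have hB : x ^ 2 < 2 * Real.log (x / y1) := by
      rcases lt_max_iff.mp hx with h | h
      · linarith
      · exact h
    push_neg at hA
    have hx1 : 1 < x := by nlinarith
    have hy2x : x < y2 := by linarith
    have hH2 : Hf y2 < Hf x := Hf_anti (Set.mem_Ici.mpr hx1.le) (Set.mem_Ici.mpr (by linarith)) hy2x
    have hH1 : Hf y1 < Hf x := by
      have hlog : x ^ 2 / 2 < Real.log (x / y1) := by linarith
      have := (Real.lt_log_iff_exp_lt (by positivity : (0:ℝ) < x / y1)).mp hlog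
      have hy1lt : y1 * Real.exp (x ^ 2 / 2) < x := by
        rw [lt_div_iff₀ h0] at this
        linarith [this]
      have hHx : Hf x = x * Real.exp (-x ^ 2 / 2) := rfl
      have hexp : Real.exp (-x ^ 2 / 2) = (Real.exp (x ^ 2 / 2))⁻¹ := by
        rw [← Real.exp_neg]; ring_nf
      have hy1Hx : y1 < Hf x := by
        rw [hHx, hexp, lt_mul_inv_iff₀ (Real.exp_pos _)]
        linarith
      calc Hf y1 = y1 * gstd y1 := rfl
        _ ≤ y1 * 1 := by nlinarith [gstd_le_one y1, gstd_pos y1]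
        _ = y1 := mul_one y1
        _ < Hf x := hy1Hx
    linarith

lemma key_dec {x y1 y2 : ℝ} (h0 : 0 < y1) (h1 : y1 < x) (hs : y1 + y2 = 2 * x)
    (hx : 10 + 2 * Real.log (x / y1) ≤ x ^ 2) :
    2 * Hf x < Hf y1 + Hf y2 := by
  have hx0 : 0 < x := h0.trans h1
  have hy2 : x < y2 := by linarith
  by_cases hc : y1 ^ 2 ≤ 10 - 2 * Real.log 2
  · -- Hf y1 ≥ 2 Hf x, Hf y2 > 0
    have hlog : Real.log (x / y1) ≤ (x ^ 2 - 10) / 2 := by linarith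
    have hxle : x ≤ y1 * Real.exp ((x ^ 2 - 10) / 2) := by
      have := (Real.log_le_iff_le_exp (by positivity : (0:ℝ) < x / y1)).mp hlog
      rw [div_le_iff₀ h0] at this
      linarith
    have hHx : Hf x ≤ y1 * Real.exp (-5) := by
      have : Hf x ≤ (y1 * Real.exp ((x ^ 2 - 10) / 2)) * Real.exp (-x ^ 2 / 2) := by
        unfold Hf gstd
        nlinarith [Real.exp_pos (-x ^ 2 / 2), hxle]
      calc Hf x ≤ y1 * Real.exp ((x ^ 2 - 10) / 2) * Real.exp (-x ^ 2 / 2) := this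
        _ = y1 * Real.exp ((x ^ 2 - 10) / 2 + -x ^ 2 / 2) := by rw [mul_assoc, ← Real.exp_add]
        _ = y1 * Real.exp (-5) := by congr 1; ring
    have hHy1 : 2 * (y1 * Real.exp (-5)) ≤ Hf y1 := by
      have harg : Real.log 2 + (-5) ≤ -y1 ^ 2 / 2 := by linarith
      have := Real.exp_le_exp.mpr harg
      rw [Real.exp_add, Real.exp_log (by norm_num : (0:ℝ) < 2)] at this
      unfold Hf gstd
      nlinarith
    have hHy2 : 0 < Hf y2 := mul_pos (by linarith) (gstd_pos y2)
    linarith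
  · push_neg at hc
    have hy1s : Real.sqrt 3 < y1 := by
      have h2 : Real.log 2 < 1 := by
        have := Real.log_two_lt_d9; linarith
      have : 3 < y1 ^ 2 := by linarith
      exact (Real.sqrt_lt' h0).mpr this
    have hmem1 : y1 ∈ Set.Ici (Real.sqrt 3) := Set.mem_Ici.mpr hy1s.le
    have hmem2 : y2 ∈ Set.Ici (Real.sqrt 3) := Set.mem_Ici.mpr (by linarith)
    have hne : y1 ≠ y2 := by linarith
    have := Hf_convex.2 hmem1 hmem2 hne (by norm_num : (0:ℝ) < 1/2)
      (by norm_num : (0:ℝ) < 1/2) (by norm_num)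
    have hmid : (1/2 : ℝ) • y1 + (1/2 : ℝ) • y2 = x := by
      simp only [smul_eq_mul]; linarith
    rw [hmid] at this
    simp only [smul_eq_mul] at this
    linarith

noncomputable def Gt (m s ε t : ℝ) : ℝ :=
  Nf ((ε - m) * t / s) + Nf ((-ε - m) * t / s) - 2 * Nf ((0 - m) * t / s)

lemma continuous_Gt (m s ε : ℝ) : Continuous (Gt m s ε) := by
  unfold Gt
  have h : ∀ a : ℝ, Continuous (fun t : ℝ => Nf (a * t / s)) :=
    fun a => continuous_Nf.comp (by fun_prop)
  exact ((h _).add (h _)).sub (continuous_const.mul (h _))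

lemma hasDerivAt_Gt (m s ε : ℝ) (hs : s ≠ 0) {t : ℝ} (ht : t ≠ 0) :
    HasDerivAt (Gt m s ε)
      ((2 * Hf (m / s * t) - Hf ((m - ε) / s * t) - Hf ((m + ε) / s * t)) / t) t := by
  have mk : ∀ a : ℝ, HasDerivAt (fun t : ℝ => Nf (a * t / s)) (gstd (a * t / s) * (a / s)) t := by
    intro a
    have hl : HasDerivAt (fun t : ℝ => a * t / s) (a / s) t := by
      have := ((hasDerivAt_id t).const_mul a).div_const s
      simpa using this
    exact (hasDerivAt_Nf _).comp t hl
  have h := ((mk (ε - m)).add (mk (-ε - m))).sub ((mk (0 - m)).const_mul 2)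
  refine h.congr_deriv (Eq.symm ?_)
  have e1 : (ε - m) * t / s = -((m - ε) / s * t) := by ring
  have e2 : (-ε - m) * t / s = -((m + ε) / s * t) := by ring
  have e3 : (0 - m) * t / s = -(m / s * t) := by ring
  rw [e1, e2, e3, gstd_neg, gstd_neg, gstd_neg]
  unfold Hf
  field_simp
  ring

lemma deriv_Gt_aux {m s ε t : ℝ} (hs : 0 < s) (hε : 0 < ε) (hεm : ε < m) (ht : 0 < t) :
    ((m - ε) / s * t) / (m / s * t) = (m - ε) / m ∧ 0 < (m - ε) / s * t ∧
      (m - ε) / s * t < m / s * t ∧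
      (m - ε) / s * t + (m + ε) / s * t = 2 * (m / s * t) ∧
      (m / s * t) / ((m - ε) / s * t) = m / (m - ε) := by
  have hm : 0 < m := hε.trans hεm
  have hme : (0:ℝ) < m - ε := by linarith
  refine ⟨?_, by positivity, ?_, by ring, ?_⟩
  · field_simp
  · have := mul_pos (mul_pos hε ht) hs
    rw [div_mul_eq_mul_div, div_mul_eq_mul_div, div_lt_div_iff₀ hs hs]
    nlinarith
  · field_simp

lemma Gt_strict_inc {m s ε : ℝ} (hs : 0 < s) (hε : 0 < ε) (hεm : ε < m) {t1 t2 : ℝ}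
    (h1 : 0 < t1) (h12 : t1 < t2)
    (hb : (m / s) ^ 2 * t2 ^ 2 ≤ max (3/2) (2 * Real.log (m / (m - ε)))) :
    Gt m s ε t1 < Gt m s ε t2 := by
  have hm : 0 < m := hε.trans hεm
  have hmono : StrictMonoOn (Gt m s ε) (Set.Icc 0 t2) := by
    apply strictMonoOn_of_deriv_pos (convex_Icc _ _) (continuous_Gt m s ε).continuousOn
    intro t ht
    rw [interior_Icc] at ht
    rw [(hasDerivAt_Gt m s ε hs.ne' ht.1.ne').deriv]
    apply div_pos _ ht.1
    obtain ⟨-, hy1pos, hy1x, hsum, hxy⟩ := deriv_Gt_aux hs hε hεm ht.1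
    have hcond : (m / s * t) ^ 2 < max (3/2) (2 * Real.log (m / s * t / ((m - ε) / s * t))) := by
      rw [hxy]
      have hlt : (m / s * t) ^ 2 < (m / s) ^ 2 * t2 ^ 2 := by
        have heq : (m / s * t) ^ 2 = (m / s) ^ 2 * t ^ 2 := by ring
        rw [heq]
        apply mul_lt_mul_of_pos_left _ (by positivity)
        nlinarith [ht.1, ht.2]
      exact lt_of_lt_of_le hlt hb
    have hkey := key_inc hy1pos hy1x hsum hcond
    linarith
  exact hmono ⟨h1.le, h12.le⟩ ⟨(h1.trans h12).le, le_rfl⟩ h12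

lemma Gt_strict_dec {m s ε : ℝ} (hs : 0 < s) (hε : 0 < ε) (hεm : ε < m) {t1 t2 : ℝ}
    (h1 : 0 < t1) (h12 : t1 < t2)
    (hb : 10 + 2 * Real.log (m / (m - ε)) ≤ (m / s) ^ 2 * t1 ^ 2) :
    Gt m s ε t2 < Gt m s ε t1 := by
  have hm : 0 < m := hε.trans hεm
  have hmono : StrictAntiOn (Gt m s ε) (Set.Icc t1 t2) := by
    apply strictAntiOn_of_deriv_neg (convex_Icc _ _) (continuous_Gt m s ε).continuousOn
    intro t ht
    rw [interior_Icc] at ht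
    have ht0 : 0 < t := h1.trans ht.1
    rw [(hasDerivAt_Gt m s ε hs.ne' ht0.ne').deriv]
    apply div_neg_of_neg_of_pos _ ht0
    obtain ⟨-, hy1pos, hy1x, hsum, hxy⟩ := deriv_Gt_aux hs hε hεm ht0
    have hcond : 10 + 2 * Real.log (m / s * t / ((m - ε) / s * t)) ≤ (m / s * t) ^ 2 := by
      rw [hxy]
      have hle : (m / s) ^ 2 * t1 ^ 2 ≤ (m / s * t) ^ 2 := by
        have heq : (m / s * t) ^ 2 = (m / s) ^ 2 * t ^ 2 := by ring
        rw [heq]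
        apply mul_le_mul_of_nonneg_left _ (by positivity)
        nlinarith [ht.1]
      linarith
    have hkey := key_dec hy1pos hy1x hsum hcond
    linarith
  exact hmono ⟨le_rfl, h12.le⟩ ⟨h12.le, le_rfl⟩ h12

lemma measurable_sign' : Measurable Real.sign := by
  unfold Real.sign
  exact Measurable.ite (measurableSet_lt measurable_id measurable_const) measurable_const
    (Measurable.ite (measurableSet_lt measurable_const measurable_id) measurable_const
      measurable_const)

lemma measurable_S (ε : ℝ) :
    Measurable (fun x : ℝ => Real.sign x - Real.sign (x - ε * Real.sign x)) :=
  measurable_sign'.sub (measurable_sign'.comp (measurable_id.sub (measurable_sign'.const_mul ε)))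

lemma abs_sign_le (x : ℝ) : |Real.sign x| ≤ 1 := by
  rcases Real.sign_apply_eq x with h | h | h <;> simp [h]

lemma abs_S_le (ε x : ℝ) : ‖Real.sign x - Real.sign (x - ε * Real.sign x)‖ ≤ 2 := by
  rw [Real.norm_eq_abs]
  have h1 := abs_sign_le x
  have h2 := abs_sign_le (x - ε * Real.sign x)
  calc |Real.sign x - Real.sign (x - ε * Real.sign x)|
      ≤ |Real.sign x| + |Real.sign (x - ε * Real.sign x)| := abs_sub _ _
    _ ≤ 2 := by linarith

lemma pi_map_eval {d : ℕ} (μs : Fin d → Measure ℝ) [∀ i, IsProbabilityMeasure (μs i)]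
    (i : Fin d) : (Measure.pi μs).map (fun u => u i) = μs i := by
  ext s hs
  rw [Measure.map_apply (measurable_pi_apply i) hs]
  have hpre : (fun u : Fin d → ℝ => u i) ⁻¹' s
      = Set.univ.pi (Function.update (fun _ => Set.univ) i s) := Set.eval_preimage
  rw [hpre, Measure.pi_pi]
  rw [Finset.prod_eq_single i
    (fun j _ hj => by rw [Function.update_of_ne hj]; exact measure_univ)
    (fun h => absurd (Finset.mem_univ i) h)]
  rw [Function.update_self]

lemma Nf_sub (p q : ℝ) : (∫ z in p..q, gstd z) = Nf q - Nf p := by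
  have h := intervalIntegral.integral_add_adjacent_intervals
    (intInt_gstd 0 p) (intInt_gstd p q)
  unfold Nf
  linarith

lemma gauss_Ioo (m s : ℝ) (hs : 0 < s) (n : ℕ) (hn : 1 ≤ n) {a b : ℝ} (hab : a ≤ b) :
    ((gaussianReal m (Real.toNNReal (s ^ 2 / n))) (Set.Ioo a b)).toReal
      = (Real.sqrt (2 * π))⁻¹ * (Nf ((b - m) * Real.sqrt n / s) - Nf ((a - m) * Real.sqrt n / s)) := by
  have hnpos : (0:ℝ) < n := by exact_mod_cast hn
  have ht : 0 < Real.sqrt n := Real.sqrt_pos.mpr hnpos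
  set t : ℝ := Real.sqrt n with htdef
  have ht2 : t ^ 2 = (n:ℝ) := Real.sq_sqrt hnpos.le
  have hv : Real.toNNReal (s ^ 2 / n) ≠ 0 := by
    simp only [ne_eq, Real.toNNReal_eq_zero, not_le]
    positivity
  rw [gaussianReal_apply_eq_integral m hv]
  rw [ENNReal.toReal_ofReal (setIntegral_nonneg measurableSet_Ioo
    (fun x _ => gaussianPDFReal_nonneg m _ x))]
  rw [← integral_Ioc_eq_integral_Ioo, ← intervalIntegral.integral_of_le hab]
  have hcoe : ((Real.toNNReal (s ^ 2 / n)) : ℝ) = s ^ 2 / n :=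
    Real.coe_toNNReal _ (by positivity)
  have hpdf : ∀ x : ℝ, gaussianPDFReal m (Real.toNNReal (s ^ 2 / n)) x
      = (Real.sqrt (2 * π))⁻¹ * (t / s * gstd (t / s * x + (0 - m) * t / s)) := by
    intro x
    rw [gaussianPDFReal_def]
    simp only [hcoe]
    have h1 : s ^ 2 / (n:ℝ) = (s / t) ^ 2 := by
      rw [div_pow, ht2]
    rw [h1]
    have h2 : Real.sqrt (2 * π * (s / t) ^ 2) = Real.sqrt (2 * π) * (s / t) := by
      rw [Real.sqrt_mul (by positivity), Real.sqrt_sq (by positivity)]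
    rw [h2]
    have h3 : -(x - m) ^ 2 / (2 * (s / t) ^ 2) = -(t / s * x + (0 - m) * t / s) ^ 2 / 2 := by
      field_simp
      ring
    rw [h3]
    unfold gstd
    rw [mul_inv]
    field_simp
  rw [intervalIntegral.integral_congr (fun x _ => hpdf x)]
  rw [intervalIntegral.integral_const_mul, intervalIntegral.integral_const_mul]
  have hc : t / s ≠ 0 := by positivity
  rw [intervalIntegral.integral_comp_mul_add gstd hc ((0 - m) * t / s)]
  rw [smul_eq_mul, Nf_sub]
  have e1 : t / s * b + (0 - m) * t / s = (b - m) * t / s := by ring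
  have e2 : t / s * a + (0 - m) * t / s = (a - m) * t / s := by ring
  rw [e1, e2]
  field_simp

lemma coord (m s ε : ℝ) (hs : 0 < s) (hε : 0 < ε) (n : ℕ) (hn : 1 ≤ n) :
    (∫ x, (Real.sign x - Real.sign (x - ε * Real.sign x))
        ∂(gaussianReal m (Real.toNNReal (s ^ 2 / n))))
      = 2 * (Real.sqrt (2 * π))⁻¹ * Gt m s ε (Real.sqrt n) := by
  have hnpos : (0:ℝ) < n := by exact_mod_cast hn
  set γ := gaussianReal m (Real.toNNReal (s ^ 2 / n)) with hγ
  have hv : Real.toNNReal (s ^ 2 / n) ≠ 0 := by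
    simp only [ne_eq, Real.toNNReal_eq_zero, not_le]
    positivity
  have hac := gaussianReal_absolutelyContinuous m hv
  have hae : ∀ c : ℝ, ∀ᵐ x ∂γ, x ≠ c := by
    intro c
    have h0 : γ {c} = 0 := hac (measure_singleton c)
    have := measure_eq_zero_iff_ae_notMem.mp h0
    simpa using this
  set f : ℝ → ℝ := fun x =>
    (Set.Ioo (0:ℝ) ε).indicator (fun _ => (2:ℝ)) x
      + (Set.Ioo (-ε) (0:ℝ)).indicator (fun _ => (-2:ℝ)) x with hf
  have hcong : (fun x => Real.sign x - Real.sign (x - ε * Real.sign x)) =ᵐ[γ] f := by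
    filter_upwards [hae ε, hae (-ε)] with x hx1 hx2
    simp only [hf]
    rcases lt_trichotomy x 0 with hx | hx | hx
    · rw [Real.sign_of_neg hx]
      have hind1 : (Set.Ioo (0:ℝ) ε).indicator (fun _ => (2:ℝ)) x = 0 :=
        Set.indicator_of_notMem (by simp [Set.mem_Ioo]; intro h; linarith) _
      rcases lt_trichotomy x (-ε) with h2 | h2 | h2
      · rw [Real.sign_of_neg (by linarith : x - ε * (-1) < 0)]
        rw [hind1, Set.indicator_of_notMem (by simp [Set.mem_Ioo]; intro h; linarith) _]
        ring
      · exact absurd h2 hx2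
      · rw [Real.sign_of_pos (by linarith : 0 < x - ε * (-1))]
        rw [hind1, Set.indicator_of_mem (by simp [Set.mem_Ioo]; exact ⟨by linarith, hx⟩) _]
        ring
    · subst hx
      simp [Real.sign_zero, Set.indicator_of_notMem, Set.mem_Ioo, hε, le_refl]
    · rw [Real.sign_of_pos hx]
      have hind2 : (Set.Ioo (-ε) (0:ℝ)).indicator (fun _ => (-2:ℝ)) x = 0 :=
        Set.indicator_of_notMem (by simp [Set.mem_Ioo]; intro h; linarith) _
      rcases lt_trichotomy x ε with h2 | h2 | h2
      · rw [Real.sign_of_neg (by linarith : x - ε * 1 < 0)]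
        rw [hind2, Set.indicator_of_mem (by simp [Set.mem_Ioo]; exact ⟨hx, h2⟩) _]
        ring
      · exact absurd h2 hx1
      · rw [Real.sign_of_pos (by linarith : 0 < x - ε * 1)]
        rw [hind2, Set.indicator_of_notMem (by simp [Set.mem_Ioo]; intro h; linarith) _]
        ring
  rw [integral_congr_ae hcong]
  have hint1 : Integrable ((Set.Ioo (0:ℝ) ε).indicator (fun _ => (2:ℝ))) γ :=
    (integrable_const _).indicator measurableSet_Ioo
  have hint2 : Integrable ((Set.Ioo (-ε) (0:ℝ)).indicator (fun _ => (-2:ℝ))) γ :=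
    (integrable_const _).indicator measurableSet_Ioo
  rw [hf, integral_add hint1 hint2, integral_indicator_const _ measurableSet_Ioo,
    integral_indicator_const _ measurableSet_Ioo]
  rw [measureReal_def, measureReal_def, hγ, gauss_Ioo m s hs n hn hε.le, gauss_Ioo m s hs n hn (by linarith : -ε ≤ 0)]
  unfold Gt
  have e1 : (ε - m) * Real.sqrt n / s = (ε - m) * Real.sqrt n / s := rfl
  simp only [smul_eq_mul, zero_sub, neg_sub]
  ring_nf

/-- Generalization gap `g_n = W · E[⟨sign(u) − sign(u − ε·sign(u)), μ⟩]` in the Gaussian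
model, where `u` has independent coordinates `u(j) ~ N(μ(j), σ(j)²/n)`. -/
noncomputable def gaussGap (d : ℕ) (W ε : ℝ) (μ σ : Fin d → ℝ) (n : ℕ) : ℝ :=
  W * ∫ u : Fin d → ℝ,
      (∑ j, (Real.sign (u j) - Real.sign (u j - ε * Real.sign (u j))) * μ j)
    ∂(Measure.pi fun j => gaussianReal (μ j) (Real.toNNReal ((σ j) ^ 2 / n)))

lemma gaussGap_eq (d : ℕ) (W ε : ℝ) (μ σ : Fin d → ℝ) (hσ : ∀ j, 0 < σ j) (hε : 0 < ε)
    (n : ℕ) (hn : 1 ≤ n) :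
    gaussGap d W ε μ σ n
      = W * ∑ j, (2 * (Real.sqrt (2 * π))⁻¹ * Gt (μ j) (σ j) ε (Real.sqrt n)) * μ j := by
  unfold gaussGap
  congr 1
  set π' := Measure.pi fun j => gaussianReal (μ j) (Real.toNNReal ((σ j) ^ 2 / n)) with hπ
  have hSint : ∀ j : Fin d,
      Integrable (fun u : Fin d → ℝ =>
        Real.sign (u j) - Real.sign (u j - ε * Real.sign (u j))) π' := by
    intro j
    refine (integrable_const (2:ℝ)).mono' ?_ (ae_of_all _ fun u => abs_S_le ε (u j))
    exact ((measurable_S ε).comp (measurable_pi_apply j)).aestronglyMeasurable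
  rw [integral_finset_sum _ (fun j _ => (hSint j).mul_const (μ j))]
  refine Finset.sum_congr rfl fun j _ => ?_
  rw [MeasureTheory.integral_mul_const]
  congr 1
  have hmap := pi_map_eval (fun j => gaussianReal (μ j) (Real.toNNReal ((σ j) ^ 2 / n))) j
  calc (∫ u : Fin d → ℝ, (Real.sign (u j) - Real.sign (u j - ε * Real.sign (u j))) ∂π')
      = ∫ x, (Real.sign x - Real.sign (x - ε * Real.sign x))
          ∂(π'.map (fun u => u j)) := by
        rw [integral_map (measurable_pi_apply j).aemeasurable
          ((measurable_S ε).aestronglyMeasurable)]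
    _ = 2 * (Real.sqrt (2 * π))⁻¹ * Gt (μ j) (σ j) ε (Real.sqrt n) := by
        rw [hπ] at *
        rw [hmap]
        exact coord (μ j) (σ j) ε (hσ j) hε n hn

/-- In the weak adversary regime `ε < min_{j : μ(j) > 0} μ(j)`, there is a universal
constant `K0 > 0` such that `g_n` is strictly increasing for
`n < min_{j : μ(j) > 0} max{3/2, 2 log(1/(1 − ε/μ(j)))}·(σ(j)/μ(j))²` and strictly
decreasing for `n ≥ max_{j : μ(j) > 0} (K0 + 2 log(1/(1 − ε/μ(j))))·(σ(j)/μ(j))²`.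
(The conditions `n < min_j …` and `n ≥ max_j …` are expressed as `∀ j` with `μ(j) > 0`.) -/
theorem gaussGap_two_stages :
    ∃ K0 : ℝ, 0 < K0 ∧
      ∀ (d : ℕ) (W ε : ℝ) (μ σ : Fin d → ℝ),
        0 < W → 0 < ε → (∀ j, 0 ≤ μ j) → (∀ j, 0 < σ j) → μ ≠ 0 →
        (∀ j, 0 < μ j → ε < μ j) →
        (∀ m n : ℕ, 1 ≤ m → m < n →
          (∀ j, 0 < μ j →
            (n : ℝ) < max (3/2) (2 * Real.log (1/(1 - ε / μ j))) * (σ j / μ j) ^ 2) →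
          gaussGap d W ε μ σ m < gaussGap d W ε μ σ n) ∧
        (∀ m n : ℕ, 1 ≤ m → m < n →
          (∀ j, 0 < μ j →
            (K0 + 2 * Real.log (1/(1 - ε / μ j))) * (σ j / μ j) ^ 2 ≤ (m : ℝ)) →
          gaussGap d W ε μ σ n < gaussGap d W ε μ σ m) := by
  refine ⟨10, by norm_num, ?_⟩
  intro d W ε μ σ hW hε hμ hσ hμne hεμ
  obtain ⟨j0, hj0⟩ : ∃ j, 0 < μ j := by
    obtain ⟨j, hj⟩ := Function.ne_iff.mp hμne
    exact ⟨j, lt_of_le_of_ne (hμ j) (Ne.symm hj)⟩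
  have hlogeq : ∀ j, 0 < μ j → 1 / (1 - ε / μ j) = μ j / (μ j - ε) := by
    intro j hj
    rw [show 1 - ε / μ j = (μ j - ε) / μ j by field_simp, one_div_div]
  constructor
  · intro m n hm hmn hcond
    have hn : 1 ≤ n := hm.trans hmn.le
    have hm0 : (0:ℝ) < m := by exact_mod_cast hm
    have hmr : (0:ℝ) < Real.sqrt m := Real.sqrt_pos.mpr hm0
    have hlt : Real.sqrt (m:ℝ) < Real.sqrt (n:ℝ) :=
      Real.sqrt_lt_sqrt hm0.le (by exact_mod_cast hmn)
    rw [gaussGap_eq d W ε μ σ hσ hε m hm, gaussGap_eq d W ε μ σ hσ hε n hn]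
    apply mul_lt_mul_of_pos_left _ hW
    have hstrict : ∀ j, 0 < μ j →
        Gt (μ j) (σ j) ε (Real.sqrt m) < Gt (μ j) (σ j) ε (Real.sqrt n) := by
      intro j hj
      apply Gt_strict_inc (hσ j) hε (hεμ j hj) hmr hlt
      have hc := hcond j hj
      rw [hlogeq j hj] at hc
      have hp : (0:ℝ) < (μ j / σ j) ^ 2 := pow_pos (div_pos hj (hσ j)) 2
      have heq : max (3/2) (2 * Real.log (μ j / (μ j - ε))) * (σ j / μ j) ^ 2
          * (μ j / σ j) ^ 2 = max (3/2) (2 * Real.log (μ j / (μ j - ε))) := by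
        have hσj := (hσ j).ne'
        have hμj := hj.ne'
        field_simp
      have h3 := mul_lt_mul_of_pos_right hc hp
      rw [heq] at h3
      rw [Real.sq_sqrt (by positivity : (0:ℝ) ≤ (n:ℝ))]
      linarith
    have hcpos : (0:ℝ) < 2 * (Real.sqrt (2 * π))⁻¹ :=
      mul_pos two_pos (inv_pos.mpr (Real.sqrt_pos.mpr (by positivity)))
    apply Finset.sum_lt_sum
    · intro j _
      rcases eq_or_lt_of_le (hμ j) with h0 | h0
      · simp [← h0]
      · exact le_of_lt (mul_lt_mul_of_pos_right
          (mul_lt_mul_of_pos_left (hstrict j h0) hcpos) h0)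
    · exact ⟨j0, Finset.mem_univ _, mul_lt_mul_of_pos_right
        (mul_lt_mul_of_pos_left (hstrict j0 hj0) hcpos) hj0⟩
  · intro m n hm hmn hcond
    have hn : 1 ≤ n := hm.trans hmn.le
    have hm0 : (0:ℝ) < m := by exact_mod_cast hm
    have hmr : (0:ℝ) < Real.sqrt m := Real.sqrt_pos.mpr hm0
    have hlt : Real.sqrt (m:ℝ) < Real.sqrt (n:ℝ) :=
      Real.sqrt_lt_sqrt hm0.le (by exact_mod_cast hmn)
    rw [gaussGap_eq d W ε μ σ hσ hε m hm, gaussGap_eq d W ε μ σ hσ hε n hn]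
    apply mul_lt_mul_of_pos_left _ hW
    have hstrict : ∀ j, 0 < μ j →
        Gt (μ j) (σ j) ε (Real.sqrt n) < Gt (μ j) (σ j) ε (Real.sqrt m) := by
      intro j hj
      apply Gt_strict_dec (hσ j) hε (hεμ j hj) hmr hlt
      have hc := hcond j hj
      rw [hlogeq j hj] at hc
      have hp : (0:ℝ) < (μ j / σ j) ^ 2 := pow_pos (div_pos hj (hσ j)) 2
      have heq : (10 + 2 * Real.log (μ j / (μ j - ε))) * (σ j / μ j) ^ 2
          * (μ j / σ j) ^ 2 = 10 + 2 * Real.log (μ j / (μ j - ε)) := by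
        have hσj := (hσ j).ne'
        have hμj := hj.ne'
        field_simp
      have h3 := mul_le_mul_of_nonneg_right hc hp.le
      rw [heq] at h3
      rw [Real.sq_sqrt (by positivity : (0:ℝ) ≤ (m:ℝ))]
      linarith
    have hcpos : (0:ℝ) < 2 * (Real.sqrt (2 * π))⁻¹ :=
      mul_pos two_pos (inv_pos.mpr (Real.sqrt_pos.mpr (by positivity)))
    apply Finset.sum_lt_sum
    · intro j _
      rcases eq_or_lt_of_le (hμ j) with h0 | h0
      · simp [← h0]
      · exact le_of_lt (mul_lt_mul_of_pos_right
          (mul_lt_mul_of_pos_left (hstrict j h0) hcpos) h0)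
    · exact ⟨j0, Finset.mem_univ _, mul_lt_mul_of_pos_right
        (mul_lt_mul_of_pos_left (hstrict j0 hj0) hcpos) hj0⟩
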